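/- Let Ω be the 3·C(N,2) × 3·C(N,2) adjacency matrix of the graph on vertices v_{ij}^m (i < j ∈ [N], m ∈ {1,2,3}) with Ω(v_{ij}^m, v_{kl}^r) = 1 if |{i,j}∩{k,l}| = 1 and m = r, Ω(v_{ij}^m, v_{kl}^r) = -1 if |{i,j}∩{k,l}| = 1 and m ≠ r, and 0 otherwise. Then the largest eigenvalue of Ω is 4(N-2) and it has multiplicity exactly 2. -/

import Mathlib

open Matrix Module

/-- Index set of pairs `(i,j)` with `i < j` in `[N]`. -/
def PairIdx (N : ℕ) := {p : Fin N × Fin N // p.1 < p.2}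

instance (N : ℕ) : Fintype (PairIdx N) := by unfold PairIdx; infer_instance
instance (N : ℕ) : DecidableEq (PairIdx N) := by unfold PairIdx; infer_instance

/-- The signed adjacency matrix `Ω` on vertices `v_{ij}^m` (`i<j ∈ [N]`, `m ∈ {1,2,3}`):
entry `+1` when the index pairs share exactly one index and the colors agree, `-1` when the
pairs share exactly one index and the colors differ, `0` otherwise. -/
def OmegaMat (N : ℕ) : Matrix (PairIdx N × Fin 3) (PairIdx N × Fin 3) ℝ :=
  fun v w =>
    if (({v.1.val.1, v.1.val.2} : Finset (Fin N)) ∩ {w.1.val.1, w.1.val.2}).card = 1 then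
      (if v.2 = w.2 then 1 else -1)
    else 0


namespace OmegaAux
open Finset

variable {N : ℕ}

def fsOf (p : PairIdx N) : Finset (Fin N) := {p.val.1, p.val.2}

lemma mem_fsOf {a : Fin N} {p : PairIdx N} : a ∈ fsOf p ↔ a = p.val.1 ∨ a = p.val.2 := by
  simp [fsOf]

lemma card_fsOf (p : PairIdx N) : (fsOf p).card = 2 := by
  rw [fsOf, Finset.card_insert_of_notMem, Finset.card_singleton]
  simp only [Finset.mem_singleton]
  exact fun h => absurd (h ▸ p.prop) (lt_irrefl _)

lemma fsOf_inj {p q : PairIdx N} (h : fsOf p = fsOf q) : p = q := by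
  have h1 : p.val.1 ∈ fsOf q := h ▸ (by simp [fsOf])
  have h2 : p.val.2 ∈ fsOf q := h ▸ (by simp [fsOf])
  have h3 : q.val.1 ∈ fsOf p := h.symm ▸ (by simp [fsOf])
  have hp := p.prop; have hq := q.prop
  rw [mem_fsOf] at h1 h2 h3
  have : p.val.1 = q.val.1 ∧ p.val.2 = q.val.2 := by
    simp only [Fin.ext_iff, Fin.lt_def] at *
    omega
  exact Subtype.ext (Prod.ext this.1 this.2)

/-- Build a pair from two distinct indices. -/
def mkPair (a b : Fin N) (h : a ≠ b) : PairIdx N :=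
  if hab : a < b then ⟨(a, b), hab⟩ else ⟨(b, a), lt_of_le_of_ne (not_lt.mp hab) (Ne.symm h)⟩

lemma fsOf_mkPair (a b : Fin N) (h : a ≠ b) : fsOf (mkPair a b h) = {a, b} := by
  unfold mkPair
  by_cases hab : a < b <;> simp [fsOf, Finset.pair_comm, hab]

lemma card_inter_le_two (p q : PairIdx N) : (fsOf p ∩ fsOf q).card ≤ 2 :=
  le_trans (Finset.card_le_card (Finset.inter_subset_left)) (le_of_eq (card_fsOf p))

lemma card_inter_eq_two_iff {p q : PairIdx N} : (fsOf p ∩ fsOf q).card = 2 ↔ p = q := by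
  constructor
  · intro h
    apply fsOf_inj
    have h1 : fsOf p ∩ fsOf q = fsOf p :=
      Finset.eq_of_subset_of_card_le Finset.inter_subset_left (by rw [h, card_fsOf])
    have h2 : fsOf p ∩ fsOf q = fsOf q :=
      Finset.eq_of_subset_of_card_le Finset.inter_subset_right (by rw [h, card_fsOf])
    rw [← h1, h2]
  · rintro rfl; rw [Finset.inter_self, card_fsOf]

/-- Number of pairs containing a fixed index. -/
lemma card_pairs_containing (a : Fin N) :
    (Finset.univ.filter (fun q : PairIdx N => a ∈ fsOf q)).card = N - 1 := by
  have hrhs : ((Finset.univ : Finset (Fin N)).erase a).card = N - 1 := by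
    rw [Finset.card_erase_of_mem (Finset.mem_univ a), Finset.card_univ, Fintype.card_fin]
  rw [← hrhs]
  apply Finset.card_bij (fun q _ => if q.val.1 = a then q.val.2 else q.val.1)
  · intro q hq
    simp only [Finset.mem_filter, Finset.mem_univ, true_and, mem_fsOf] at hq
    have hlt := q.prop
    simp only [Finset.mem_erase, Finset.mem_univ, and_true]
    split <;> (simp only [Fin.ext_iff, Fin.lt_def] at *; omega)
  · intro q1 h1 q2 h2 heq
    simp only [Finset.mem_filter, Finset.mem_univ, true_and, mem_fsOf] at h1 h2
    apply fsOf_inj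
    have e1 : fsOf q1 = {a, if q1.val.1 = a then q1.val.2 else q1.val.1} := by
      unfold fsOf
      rcases h1 with h | h
      · rw [if_pos h.symm, h]
      · have hlt := q1.prop
        rw [if_neg, h, Finset.pair_comm]
        intro hh; simp only [Fin.ext_iff, Fin.lt_def] at *; omega
    have e2 : fsOf q2 = {a, if q2.val.1 = a then q2.val.2 else q2.val.1} := by
      unfold fsOf
      rcases h2 with h | h
      · rw [if_pos h.symm, h]
      · have hlt := q2.prop
        rw [if_neg, h, Finset.pair_comm]
        intro hh; simp only [Fin.ext_iff, Fin.lt_def] at *; omega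
    rw [e1, e2, heq]
  · intro b hb
    simp only [Finset.mem_erase, Finset.mem_univ, and_true] at hb
    refine ⟨mkPair a b (Ne.symm hb), ?_, ?_⟩
    · simp [Finset.mem_filter, fsOf_mkPair]
    · unfold mkPair
      by_cases hab : a < b <;> simp only [hab, ↓reduceDIte]
      · simp
      · simp [hb]



/-- adjacency entry of the Johnson-graph part. -/
def Aent (p q : PairIdx N) : ℝ := if (fsOf p ∩ fsOf q).card = 1 then 1 else 0

lemma Aent_nonneg (p q : PairIdx N) : 0 ≤ Aent p q := by unfold Aent; split <;> norm_num

lemma Aent_symm (p q : PairIdx N) : Aent p q = Aent q p := by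
  unfold Aent; rw [Finset.inter_comm]

lemma card_inter_real (p q : PairIdx N) :
    ((fsOf p ∩ fsOf q).card : ℝ) = Aent p q + 2 * (if p = q then 1 else 0) := by
  have h2 := card_inter_le_two p q
  unfold Aent
  by_cases hpq : p = q
  · subst hpq; rw [Finset.inter_self, card_fsOf]
    have : ¬ (2 = 1) := by norm_num
    simp [card_fsOf]
  · have hne : (fsOf p ∩ fsOf q).card ≠ 2 := fun h => hpq (card_inter_eq_two_iff.mp h)
    by_cases h1 : (fsOf p ∩ fsOf q).card = 1
    · rw [h1]; norm_num [hpq]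
    · have h0 : (fsOf p ∩ fsOf q).card = 0 := by omega
      rw [h0]; norm_num [hpq]


lemma sum_indicator_pairs (hN : 5 ≤ N) (a : Fin N) :
    ∑ q : PairIdx N, (if a ∈ fsOf q then (1:ℝ) else 0) = (N:ℝ) - 1 := by
  rw [Finset.sum_boole]
  rw [card_pairs_containing a]
  have : (1:ℕ) ≤ N := by omega
  push_cast [this]
  ring

lemma card_inter_as_sum (p q : PairIdx N) :
    ((fsOf p ∩ fsOf q).card : ℝ) = ∑ a ∈ fsOf p, (if a ∈ fsOf q then (1:ℝ) else 0) := by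
  rw [Finset.sum_boole, Finset.filter_mem_eq_inter]

lemma deg_A (hN : 5 ≤ N) (p : PairIdx N) :
    ∑ q : PairIdx N, Aent p q = 2 * ((N:ℝ) - 2) := by
  have key : ∑ q : PairIdx N, ((fsOf p ∩ fsOf q).card : ℝ) = 2 * ((N:ℝ) - 1) := by
    calc ∑ q : PairIdx N, ((fsOf p ∩ fsOf q).card : ℝ)
        = ∑ q : PairIdx N, ∑ a ∈ fsOf p, (if a ∈ fsOf q then (1:ℝ) else 0) := by
          exact Finset.sum_congr rfl fun q _ => card_inter_as_sum p q
      _ = ∑ a ∈ fsOf p, ∑ q : PairIdx N, (if a ∈ fsOf q then (1:ℝ) else 0) :=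
          Finset.sum_comm
      _ = ∑ a ∈ fsOf p, ((N:ℝ) - 1) :=
          Finset.sum_congr rfl fun a _ => sum_indicator_pairs hN a
      _ = 2 * ((N:ℝ) - 1) := by rw [Finset.sum_const, card_fsOf]; ring
  have key2 : ∑ q : PairIdx N, ((fsOf p ∩ fsOf q).card : ℝ)
      = (∑ q : PairIdx N, Aent p q) + 2 := by
    rw [Finset.sum_congr rfl fun q (_ : q ∈ Finset.univ) => card_inter_real p q,
      Finset.sum_add_distrib, ← Finset.mul_sum]
    congr 1
    simp
  have := key2.symm.trans key
  linarith


def dotP (u v : PairIdx N → ℝ) : ℝ := ∑ p, u p * v p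

def QA (u : PairIdx N → ℝ) : ℝ := ∑ p, ∑ q, Aent p q * u p * u q

lemma dotP_nonneg (u : PairIdx N → ℝ) : 0 ≤ dotP u u :=
  Finset.sum_nonneg fun p _ => mul_self_nonneg _

lemma sum_A_left (hN : 5 ≤ N) (f : PairIdx N → ℝ) :
    ∑ p : PairIdx N, ∑ q : PairIdx N, Aent p q * f p = 2 * ((N:ℝ) - 2) * ∑ p, f p := by
  rw [Finset.mul_sum]
  refine Finset.sum_congr rfl fun p _ => ?_
  rw [← Finset.sum_mul, deg_A hN p]

lemma sum_A_right (hN : 5 ≤ N) (f : PairIdx N → ℝ) :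
    ∑ p : PairIdx N, ∑ q : PairIdx N, Aent p q * f q = 2 * ((N:ℝ) - 2) * ∑ p, f p := by
  rw [Finset.sum_comm]
  rw [show (∑ q : PairIdx N, ∑ p : PairIdx N, Aent p q * f q)
      = ∑ q : PairIdx N, ∑ p : PairIdx N, Aent q p * f q from
    Finset.sum_congr rfl fun q _ => Finset.sum_congr rfl fun p _ => by rw [Aent_symm]]
  exact sum_A_left hN f

lemma QA_upper (hN : 5 ≤ N) (u : PairIdx N → ℝ) :
    2 * ((N:ℝ) - 2) * dotP u u - QA u
      = (1/2) * ∑ p : PairIdx N, ∑ q : PairIdx N, Aent p q * (u p - u q)^2 := by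
  have key : ∑ p : PairIdx N, ∑ q : PairIdx N, Aent p q * (u p - u q)^2
      = (∑ p : PairIdx N, ∑ q : PairIdx N, Aent p q * (u p * u p))
        + (∑ p : PairIdx N, ∑ q : PairIdx N, Aent p q * (u q * u q))
        - 2 * QA u := by
    unfold QA
    rw [Finset.mul_sum, ← Finset.sum_add_distrib, ← Finset.sum_sub_distrib]
    refine Finset.sum_congr rfl fun p _ => ?_
    rw [Finset.mul_sum, ← Finset.sum_add_distrib, ← Finset.sum_sub_distrib]
    exact Finset.sum_congr rfl fun q _ => by ring
  have h1 := sum_A_left hN (fun p => u p * u p)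
  have h2 := sum_A_right hN (fun p => u p * u p)
  unfold dotP
  linarith

def Ment (a : Fin N) (p : PairIdx N) : ℝ := if a ∈ fsOf p then 1 else 0

lemma M_col (p q : PairIdx N) :
    ∑ a : Fin N, Ment a p * Ment a q = Aent p q + 2 * (if p = q then 1 else 0) := by
  rw [← card_inter_real]
  have : ∀ a : Fin N, Ment a p * Ment a q = if a ∈ fsOf p ∩ fsOf q then (1:ℝ) else 0 := by
    intro a
    by_cases h1 : a ∈ fsOf p <;> by_cases h2 : a ∈ fsOf q <;>
      simp [Ment, h1, h2, Finset.mem_inter]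
  rw [Finset.sum_congr rfl fun a _ => this a, Finset.sum_boole, Finset.filter_mem_eq_inter,
    Finset.univ_inter]

lemma QA_lower (u : PairIdx N → ℝ) :
    QA u + 2 * dotP u u = ∑ a : Fin N, (∑ p : PairIdx N, Ment a p * u p)^2 := by
  have step1 : ∀ a : Fin N, (∑ p : PairIdx N, Ment a p * u p)^2
      = ∑ p : PairIdx N, ∑ q : PairIdx N, (Ment a p * Ment a q) * (u p * u q) := by
    intro a
    rw [sq, Finset.sum_mul_sum]
    exact Finset.sum_congr rfl fun p _ => Finset.sum_congr rfl fun q _ => by ring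
  rw [Finset.sum_congr rfl fun a _ => step1 a, Finset.sum_comm]
  have step2 : ∀ p : PairIdx N,
      (∑ a : Fin N, ∑ q : PairIdx N, (Ment a p * Ment a q) * (u p * u q))
      = ∑ q : PairIdx N, (Aent p q + 2 * (if p = q then 1 else 0)) * (u p * u q) := by
    intro p
    rw [Finset.sum_comm]
    refine Finset.sum_congr rfl fun q _ => ?_
    rw [← M_col p q, Finset.sum_mul]
  rw [Finset.sum_congr rfl fun p _ => step2 p]
  have step3 : ∀ p : PairIdx N,
      (∑ q : PairIdx N, (Aent p q + 2 * (if p = q then 1 else 0)) * (u p * u q))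
      = (∑ q : PairIdx N, Aent p q * u p * u q) + 2 * (u p * u p) := by
    intro p
    have : ∀ q : PairIdx N, (Aent p q + 2 * (if p = q then 1 else 0)) * (u p * u q)
        = Aent p q * u p * u q + (if p = q then 2 * (u p * u q) else 0) := by
      intro q; split <;> ring
    rw [Finset.sum_congr rfl fun q _ => this q, Finset.sum_add_distrib,
      Finset.sum_ite_eq Finset.univ p (fun q => 2 * (u p * u q)), if_pos (Finset.mem_univ p)]
  rw [Finset.sum_congr rfl fun p _ => step3 p, Finset.sum_add_distrib]
  unfold QA dotP
  rw [Finset.mul_sum]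

/-- connectivity: a function constant on edges of the Johnson graph is constant. -/
lemma constant_of_adj (hN : 5 ≤ N) (z : PairIdx N → ℝ)
    (h : ∀ p q : PairIdx N, (fsOf p ∩ fsOf q).card = 1 → z p = z q)
    (p q : PairIdx N) : z p = z q := by
  have h2 := card_inter_le_two p q
  by_cases hc2 : (fsOf p ∩ fsOf q).card = 2
  · rw [card_inter_eq_two_iff.mp hc2]
  by_cases hc1 : (fsOf p ∩ fsOf q).card = 1
  · exact h p q hc1
  have hc0 : (fsOf p ∩ fsOf q).card = 0 := by omega
  have hdisj : ∀ x, x ∈ fsOf p → x ∉ fsOf q := by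
    intro x hx hx'
    have := Finset.card_eq_zero.mp hc0
    exact absurd (Finset.mem_inter.mpr ⟨hx, hx'⟩) (this ▸ Finset.notMem_empty x)
  have hxa : p.val.1 ∈ fsOf p := by simp [fsOf]
  have hb : p.val.2 ∈ fsOf p := by simp [fsOf]
  have hc : q.val.1 ∈ fsOf q := by simp [fsOf]
  have hd : q.val.2 ∈ fsOf q := by simp [fsOf]
  have hac : p.val.1 ≠ q.val.1 := fun he => hdisj _ hxa (he ▸ hc)
  set r := mkPair p.val.1 q.val.1 hac with hr
  have hfr : fsOf r = {p.val.1, q.val.1} := fsOf_mkPair _ _ hac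
  have e1 : fsOf p ∩ fsOf r = {p.val.1} := by
    rw [hfr]
    ext x
    simp only [Finset.mem_inter, mem_fsOf, Finset.mem_insert, Finset.mem_singleton]
    constructor
    · rintro ⟨hx1 | hx1, hx2 | hx2⟩
      · exact hx1
      · exact hx1
      · exact hx2
      · exfalso; exact hdisj x (by rw [hx1]; exact hb) (by rw [hx2]; exact hc)
    · rintro rfl; exact ⟨Or.inl rfl, Or.inl rfl⟩
  have e2 : fsOf r ∩ fsOf q = {q.val.1} := by
    rw [hfr]
    ext x
    simp only [Finset.mem_inter, mem_fsOf, Finset.mem_insert, Finset.mem_singleton]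
    constructor
    · rintro ⟨hx1 | hx1, hx2 | hx2⟩
      · exact hx2
      · exfalso; exact hdisj x (by rw [hx1]; exact hxa) (by rw [hx2]; exact hd)
      · exact hx1
      · exact hx1
    · rintro rfl; exact ⟨Or.inr rfl, Or.inl rfl⟩
  have hz1 : z p = z r := h p r (by rw [e1]; exact Finset.card_singleton _)
  have hz2 : z r = z q := h r q (by rw [e2]; exact Finset.card_singleton _)
  rw [hz1, hz2]


def Bent (m r : Fin 3) : ℝ := if m = r then 1 else -1

lemma omega_entry (p q : PairIdx N) (m r : Fin 3) :
    OmegaMat N (p, m) (q, r) = Aent p q * Bent m r := by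
  unfold _root_.OmegaMat Aent Bent fsOf
  by_cases h : (({p.val.1, p.val.2} : Finset (Fin N)) ∩ {q.val.1, q.val.2}).card = 1 <;>
    simp [h]

lemma mulVec_omega (x : PairIdx N × Fin 3 → ℝ) (p : PairIdx N) (m : Fin 3) :
    (OmegaMat N).mulVec x (p, m)
      = ∑ q : PairIdx N, ∑ r : Fin 3, Aent p q * Bent m r * x (q, r) := by
  unfold Matrix.mulVec dotProduct
  rw [Fintype.sum_prod_type]
  exact Finset.sum_congr rfl fun q _ => Finset.sum_congr rfl fun r _ => by
    show OmegaMat N (p, m) (q, r) * x (q, r) = _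
    rw [omega_entry]

lemma color_sum (a b : Fin 3 → ℝ) :
    ∑ m : Fin 3, ∑ r : Fin 3, Bent m r * a m * b r
      = 2 * (∑ m : Fin 3, a m * b m) - (∑ m : Fin 3, a m) * (∑ m : Fin 3, b m) := by
  simp [Bent, Fin.sum_univ_three]
  ring

lemma Bent_sum (m : Fin 3) (b : Fin 3 → ℝ) :
    ∑ r : Fin 3, Bent m r * b r = 2 * b m - ∑ r : Fin 3, b r := by
  have h : ∀ r, Bent m r * b r = 2 * ((if m = r then 1 else 0) * b r) - b r := by
    intro r; unfold Bent; split <;> ring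
  rw [Finset.sum_congr rfl fun r _ => h r, Finset.sum_sub_distrib, ← Finset.mul_sum]
  simp [ite_mul, Finset.sum_ite_eq]

lemma color_center (a b : Fin 3 → ℝ) :
    ∑ m : Fin 3, (a m - (1/3) * ∑ r : Fin 3, a r) * (b m - (1/3) * ∑ r : Fin 3, b r)
      = (∑ m : Fin 3, a m * b m) - (1/3) * ((∑ m : Fin 3, a m) * (∑ m : Fin 3, b m)) := by
  norm_num [Fin.sum_univ_three]
  ring

lemma Qx_eq (x : PairIdx N × Fin 3 → ℝ) :
    ∑ v : PairIdx N × Fin 3, x v * (OmegaMat N).mulVec x v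
      = 2 * (∑ m : Fin 3, QA (fun p => x (p, m)))
        - QA (fun p => ∑ m : Fin 3, x (p, m)) := by
  have key : ∀ p : PairIdx N, ∑ m : Fin 3, x (p, m) * (OmegaMat N).mulVec x (p, m)
      = ∑ q : PairIdx N, Aent p q *
          (2 * (∑ m : Fin 3, x (p, m) * x (q, m))
            - (∑ m : Fin 3, x (p, m)) * (∑ m : Fin 3, x (q, m))) := by
    intro p
    have e1 : ∀ m : Fin 3, x (p, m) * (OmegaMat N).mulVec x (p, m)
        = ∑ q : PairIdx N, ∑ r : Fin 3, Aent p q * (Bent m r * x (p, m) * x (q, r)) := by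
      intro m
      rw [mulVec_omega, Finset.mul_sum]
      refine Finset.sum_congr rfl fun q _ => ?_
      rw [Finset.mul_sum]
      exact Finset.sum_congr rfl fun r _ => by ring
    rw [Finset.sum_congr rfl fun m _ => e1 m, Finset.sum_comm]
    refine Finset.sum_congr rfl fun q _ => ?_
    rw [← color_sum (fun m => x (p, m)) (fun r => x (q, r)), Finset.mul_sum]
    refine Finset.sum_congr rfl fun m _ => ?_
    rw [Finset.mul_sum]
    try exact Finset.sum_congr rfl fun r _ => by ring
  rw [Fintype.sum_prod_type, Finset.sum_congr rfl fun p _ => key p]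
  have lhs_eq : ∀ p q : PairIdx N,
      Aent p q * (2 * (∑ m : Fin 3, x (p, m) * x (q, m))
        - (∑ m : Fin 3, x (p, m)) * (∑ m : Fin 3, x (q, m)))
      = (∑ m : Fin 3, 2 * (Aent p q * x (p, m) * x (q, m)))
        - Aent p q * (∑ m : Fin 3, x (p, m)) * (∑ m : Fin 3, x (q, m)) := by
    intro p q
    have : ∀ m : Fin 3, 2 * (Aent p q * x (p, m) * x (q, m))
        = (2 * Aent p q) * (x (p, m) * x (q, m)) := fun m => by ring
    rw [Finset.sum_congr rfl fun m _ => this m, ← Finset.mul_sum]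
    ring
  rw [Finset.sum_congr rfl fun p _ => Finset.sum_congr rfl fun q _ => lhs_eq p q]
  simp only [Finset.sum_sub_distrib]
  have T1 : (∑ p : PairIdx N, ∑ q : PairIdx N, ∑ m : Fin 3,
        2 * (Aent p q * x (p, m) * x (q, m)))
      = 2 * (∑ m : Fin 3, QA (fun p => x (p, m))) := by
    calc (∑ p : PairIdx N, ∑ q : PairIdx N, ∑ m : Fin 3,
            2 * (Aent p q * x (p, m) * x (q, m)))
        = ∑ p : PairIdx N, ∑ m : Fin 3, ∑ q : PairIdx N,
            2 * (Aent p q * x (p, m) * x (q, m)) :=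
          Finset.sum_congr rfl fun p _ => Finset.sum_comm
      _ = ∑ m : Fin 3, ∑ p : PairIdx N, ∑ q : PairIdx N,
            2 * (Aent p q * x (p, m) * x (q, m)) := Finset.sum_comm
      _ = 2 * (∑ m : Fin 3, QA (fun p => x (p, m))) := by
          rw [Finset.mul_sum]
          refine Finset.sum_congr rfl fun m _ => ?_
          unfold QA
          rw [Finset.mul_sum]
          refine Finset.sum_congr rfl fun p _ => ?_
          rw [Finset.mul_sum]
  have T2 : (∑ p : PairIdx N, ∑ q : PairIdx N,
        Aent p q * (∑ m : Fin 3, x (p, m)) * (∑ m : Fin 3, x (q, m)))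
      = QA (fun p => ∑ m : Fin 3, x (p, m)) := rfl
  rw [T1, T2]


noncomputable def sfun (x : PairIdx N × Fin 3 → ℝ) : PairIdx N → ℝ := fun p => ∑ m : Fin 3, x (p, m)
noncomputable def yfun (x : PairIdx N × Fin 3 → ℝ) (m : Fin 3) : PairIdx N → ℝ := fun p => x (p, m)
noncomputable def zfun (x : PairIdx N × Fin 3 → ℝ) (m : Fin 3) : PairIdx N → ℝ :=
  fun p => x (p, m) - (1/3) * sfun x p

lemma color_center' (x : PairIdx N × Fin 3 → ℝ) (p q : PairIdx N) :
    ∑ m : Fin 3, zfun x m p * zfun x m q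
      = (∑ m : Fin 3, yfun x m p * yfun x m q) - (1/3) * (sfun x p * sfun x q) := by
  unfold zfun yfun sfun
  norm_num [Fin.sum_univ_three]
  ring

lemma E1 (x : PairIdx N × Fin 3 → ℝ) : ∑ m : Fin 3, QA (zfun x m)
    = (∑ m : Fin 3, QA (yfun x m)) - (1/3) * QA (sfun x) := by
  unfold QA
  conv_lhs => rw [Finset.sum_comm]
  conv_rhs => rw [Finset.sum_comm, Finset.mul_sum, ← Finset.sum_sub_distrib]
  refine Finset.sum_congr rfl fun p _ => ?_
  conv_lhs => rw [Finset.sum_comm]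
  conv_rhs => rw [Finset.sum_comm, Finset.mul_sum, ← Finset.sum_sub_distrib]
  refine Finset.sum_congr rfl fun q _ => ?_
  have l1 : ∑ m : Fin 3, Aent p q * zfun x m p * zfun x m q
      = Aent p q * ∑ m : Fin 3, zfun x m p * zfun x m q := by
    rw [Finset.mul_sum]; exact Finset.sum_congr rfl fun m _ => by ring
  have l2 : ∑ m : Fin 3, Aent p q * yfun x m p * yfun x m q
      = Aent p q * ∑ m : Fin 3, yfun x m p * yfun x m q := by
    rw [Finset.mul_sum]; exact Finset.sum_congr rfl fun m _ => by ring
  rw [l1, l2, color_center' x p q]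
  ring

lemma E2 (x : PairIdx N × Fin 3 → ℝ) : ∑ m : Fin 3, dotP (zfun x m) (zfun x m)
    = (∑ m : Fin 3, dotP (yfun x m) (yfun x m)) - (1/3) * dotP (sfun x) (sfun x) := by
  unfold dotP
  conv_lhs => rw [Finset.sum_comm]
  conv_rhs => rw [Finset.sum_comm, Finset.mul_sum, ← Finset.sum_sub_distrib]
  exact Finset.sum_congr rfl fun p _ => color_center' x p p

lemma E3 (x : PairIdx N × Fin 3 → ℝ) :
    ∑ v : PairIdx N × Fin 3, x v * x v = ∑ m : Fin 3, dotP (yfun x m) (yfun x m) := by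
  rw [Fintype.sum_prod_type, Finset.sum_comm]
  rfl

lemma E4 (x : PairIdx N × Fin 3 → ℝ) :
    ∑ v : PairIdx N × Fin 3, x v * (OmegaMat N).mulVec x v
      = 2 * (∑ m : Fin 3, QA (yfun x m)) - QA (sfun x) := Qx_eq x

lemma master (hN : 5 ≤ N) (x : PairIdx N × Fin 3 → ℝ) (μ : ℝ)
    (hx : (OmegaMat N).mulVec x = μ • x) :
    (4 * ((N:ℝ) - 2) - μ) * (∑ v : PairIdx N × Fin 3, x v * x v)
      = 2 * (2 * ((N:ℝ) - 2) * (∑ m : Fin 3, dotP (zfun x m) (zfun x m))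
              - (∑ m : Fin 3, QA (zfun x m)))
        + (1/3) * (QA (sfun x) + 2 * dotP (sfun x) (sfun x))
        + ((4 * ((N:ℝ) - 2) - 2)/3) * dotP (sfun x) (sfun x) := by
  have hQ : ∑ v : PairIdx N × Fin 3, x v * (OmegaMat N).mulVec x v
      = μ * ∑ v : PairIdx N × Fin 3, x v * x v := by
    rw [hx, Finset.mul_sum]
    exact Finset.sum_congr rfl fun v _ => by
      simp only [Pi.smul_apply, smul_eq_mul]; ring
  have hQ2 := hQ.symm.trans (E4 x)
  have e1 := E1 x
  have e2 := E2 x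
  have e3 := E3 x
  linear_combination (4 * ((N:ℝ) - 2)) * e3 - hQ2 - (4 * ((N:ℝ) - 2)) * e2 + 2 * e1


lemma hsplit (x : PairIdx N × Fin 3 → ℝ) :
    2 * ((N:ℝ) - 2) * (∑ m : Fin 3, dotP (zfun x m) (zfun x m))
        - (∑ m : Fin 3, QA (zfun x m))
      = ∑ m : Fin 3, (2 * ((N:ℝ) - 2) * dotP (zfun x m) (zfun x m) - QA (zfun x m)) := by
  rw [Finset.sum_sub_distrib, ← Finset.mul_sum]

lemma term_nonneg (hN : 5 ≤ N) (u : PairIdx N → ℝ) :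
    0 ≤ 2 * ((N:ℝ) - 2) * dotP u u - QA u := by
  rw [QA_upper hN]
  apply mul_nonneg (by norm_num)
  exact Finset.sum_nonneg fun p _ => Finset.sum_nonneg fun q _ =>
    mul_nonneg (Aent_nonneg p q) (sq_nonneg _)

lemma qa_two_nonneg (u : PairIdx N → ℝ) : 0 ≤ QA u + 2 * dotP u u := by
  rw [QA_lower]
  exact Finset.sum_nonneg fun a _ => sq_nonneg _

lemma eig_le (hN : 5 ≤ N) (x : PairIdx N × Fin 3 → ℝ) (μ : ℝ)
    (hx : (OmegaMat N).mulVec x = μ • x) (hx0 : x ≠ 0) : μ ≤ 4 * ((N:ℝ) - 2) := by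
  have hm := master hN x μ hx
  have hn2 : 0 < ∑ v : PairIdx N × Fin 3, x v * x v := by
    have hex : ∃ v, x v ≠ 0 := by
      by_contra h; push_neg at h; exact hx0 (funext h)
    obtain ⟨v, hv⟩ := hex
    exact Finset.sum_pos' (fun w _ => mul_self_nonneg _)
      ⟨v, Finset.mem_univ v, mul_self_pos.mpr hv⟩
  have h1 : 0 ≤ 2 * ((N:ℝ) - 2) * (∑ m : Fin 3, dotP (zfun x m) (zfun x m))
      - (∑ m : Fin 3, QA (zfun x m)) := by
    rw [hsplit]
    exact Finset.sum_nonneg fun m _ => term_nonneg hN _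
  have h2 := qa_two_nonneg (sfun x)
  have h3 := dotP_nonneg (sfun x)
  have hNr : (5:ℝ) ≤ (N:ℝ) := by exact_mod_cast hN
  nlinarith [hm, hn2, h1, h2, h3]

lemma eig_eq (hN : 5 ≤ N) (x : PairIdx N × Fin 3 → ℝ)
    (hx : (OmegaMat N).mulVec x = (4 * ((N:ℝ) - 2)) • x) :
    ∃ b : Fin 3 → ℝ, (∑ m : Fin 3, b m) = 0 ∧ ∀ v : PairIdx N × Fin 3, x v = b v.2 := by
  have hm := master hN x _ hx
  rw [sub_self, zero_mul] at hm
  have h1 : 0 ≤ 2 * ((N:ℝ) - 2) * (∑ m : Fin 3, dotP (zfun x m) (zfun x m))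
      - (∑ m : Fin 3, QA (zfun x m)) := by
    rw [hsplit]
    exact Finset.sum_nonneg fun m _ => term_nonneg hN _
  have h2 := qa_two_nonneg (sfun x)
  have h3 := dotP_nonneg (sfun x)
  have hNr : (5:ℝ) ≤ (N:ℝ) := by exact_mod_cast hN
  -- each of the three groups is zero
  have hds : dotP (sfun x) (sfun x) = 0 := by nlinarith
  have hzero : 2 * ((N:ℝ) - 2) * (∑ m : Fin 3, dotP (zfun x m) (zfun x m))
      - (∑ m : Fin 3, QA (zfun x m)) = 0 := by nlinarith
  -- s vanishes pointwise
  have hs : ∀ p : PairIdx N, sfun x p = 0 := by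
    intro p
    have := (Finset.sum_eq_zero_iff_of_nonneg
      (fun q (_ : q ∈ Finset.univ) => mul_self_nonneg (sfun x q))).mp hds p (Finset.mem_univ p)
    exact mul_self_eq_zero.mp this
  -- each color term zero & z constant on edges
  have hzm : ∀ m : Fin 3, ∀ p q : PairIdx N, zfun x m p = zfun x m q := by
    intro m
    have hterm : 2 * ((N:ℝ) - 2) * dotP (zfun x m) (zfun x m) - QA (zfun x m) = 0 := by
      have := (Finset.sum_eq_zero_iff_of_nonneg
        (fun r (_ : r ∈ Finset.univ) => term_nonneg hN (zfun x r))).mp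
        (by rw [← hsplit]; exact hzero) m (Finset.mem_univ m)
      exact this
    have hsq : ∑ p : PairIdx N, ∑ q : PairIdx N,
        Aent p q * (zfun x m p - zfun x m q)^2 = 0 := by
      have := (QA_upper hN (zfun x m)).symm.trans hterm
      linarith
    have hedge : ∀ p q : PairIdx N, (fsOf p ∩ fsOf q).card = 1 →
        zfun x m p = zfun x m q := by
      intro p q hpq
      have hinner := (Finset.sum_eq_zero_iff_of_nonneg
        (fun p (_ : p ∈ Finset.univ) => Finset.sum_nonneg fun q _ =>
          mul_nonneg (Aent_nonneg p q) (sq_nonneg _))).mp hsq p (Finset.mem_univ p)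
      have hterm2 := (Finset.sum_eq_zero_iff_of_nonneg
        (fun q (_ : q ∈ Finset.univ) =>
          mul_nonneg (Aent_nonneg p q) (sq_nonneg _))).mp hinner q (Finset.mem_univ q)
      have hA : Aent p q = 1 := by unfold Aent; rw [if_pos hpq]
      rw [hA, one_mul] at hterm2
      have := pow_eq_zero_iff (n := 2) (by norm_num) |>.mp hterm2
      linarith
    exact constant_of_adj hN _ hedge
  -- assemble
  have p0 : PairIdx N := ⟨(⟨0, by omega⟩, ⟨1, by omega⟩), Fin.mk_lt_mk.mpr one_pos⟩
  refine ⟨fun m => x (p0, m), hs p0, ?_⟩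
  rintro ⟨p, m⟩
  have hz := hzm m p p0
  unfold zfun at hz
  rw [hs p, hs p0] at hz
  simpa using hz


noncomputable def Lmap (N : ℕ) : (Fin 3 → ℝ) →ₗ[ℝ] (PairIdx N × Fin 3 → ℝ) where
  toFun b := fun v => b v.2
  map_add' := fun _ _ => rfl
  map_smul' := fun _ _ => rfl

noncomputable def sumL : (Fin 3 → ℝ) →ₗ[ℝ] ℝ where
  toFun b := ∑ m : Fin 3, b m
  map_add' := fun a b => by simp [Finset.sum_add_distrib]
  map_smul' := fun c b => by simp [Finset.mul_sum]

lemma omega_mulVec_L (hN : 5 ≤ N) (b : Fin 3 → ℝ) (hb : ∑ m : Fin 3, b m = 0) :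
    (OmegaMat N).mulVec (Lmap N b) = (4 * ((N:ℝ) - 2)) • Lmap N b := by
  funext v
  obtain ⟨p, m⟩ := v
  rw [mulVec_omega]
  have inner : ∀ q : PairIdx N, (∑ r : Fin 3, Aent p q * Bent m r * (Lmap N b) (q, r))
      = Aent p q * (2 * b m) := by
    intro q
    have e : ∀ r : Fin 3, Aent p q * Bent m r * (Lmap N b) (q, r)
        = Aent p q * (Bent m r * b r) := by
      intro r
      show Aent p q * Bent m r * b r = _
      ring
    rw [Finset.sum_congr rfl fun r _ => e r, ← Finset.mul_sum, Bent_sum, hb]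
    ring
  rw [Finset.sum_congr rfl fun q _ => inner q, ← Finset.sum_mul, deg_A hN p]
  show 2 * ((N:ℝ) - 2) * (2 * b m) = (4 * ((N:ℝ) - 2)) • b m
  rw [smul_eq_mul]
  ring

theorem omegaMat_top_eigenvalue' (N : ℕ) (hN : 5 ≤ N) :
    Module.finrank ℝ (Module.End.eigenspace (Matrix.toLin' (OmegaMat N))
        ((4 : ℝ) * ((N : ℝ) - 2))) = 2 ∧
    (∀ μ : ℝ, Module.End.eigenspace (Matrix.toLin' (OmegaMat N)) μ ≠ ⊥ →
      μ ≤ 4 * ((N : ℝ) - 2)) := by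
  have hmem : ∀ (x : PairIdx N × Fin 3 → ℝ) (μ : ℝ),
      (x ∈ Module.End.eigenspace (Matrix.toLin' (OmegaMat N)) μ)
        ↔ (OmegaMat N).mulVec x = μ • x := by
    intro x μ
    rw [Module.End.mem_eigenspace_iff, Matrix.toLin'_apply]
  constructor
  · have hspace : Module.End.eigenspace (Matrix.toLin' (OmegaMat N)) (4 * ((N:ℝ) - 2))
        = Submodule.map (Lmap N) (LinearMap.ker sumL) := by
      apply le_antisymm
      · intro x hx
        rw [hmem] at hx
        obtain ⟨b, hb, hc⟩ := eig_eq hN x hx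
        exact ⟨b, by simp only [SetLike.mem_coe, LinearMap.mem_ker]; exact hb, by funext v; exact (hc v).symm⟩
      · rintro x ⟨b, hb, rfl⟩
        rw [hmem]
        exact omega_mulVec_L hN b hb
    rw [hspace]
    have hinj : Function.Injective (Lmap N) := by
      intro b1 b2 h
      have p0 : PairIdx N := ⟨(⟨0, by omega⟩, ⟨1, by omega⟩), Fin.mk_lt_mk.mpr one_pos⟩
      funext m
      exact congrFun h (p0, m)
    rw [← LinearEquiv.finrank_eq
      (Submodule.equivMapOfInjective (Lmap N) hinj (LinearMap.ker sumL))]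
    have hr := LinearMap.finrank_range_add_finrank_ker (sumL)
    have hsurj : LinearMap.range sumL = ⊤ := by
      rw [LinearMap.range_eq_top]
      intro t
      refine ⟨fun _ => t/3, ?_⟩
      show (∑ _m : Fin 3, t/3) = t
      rw [Fin.sum_univ_three]
      ring
    rw [hsurj, finrank_top] at hr
    have h3 : Module.finrank ℝ (Fin 3 → ℝ) = 3 := Module.finrank_fin_fun ℝ
    have h1 : Module.finrank ℝ ℝ = 1 := Module.finrank_self ℝ
    omega
  · intro μ hμ
    obtain ⟨x, hx, hx0⟩ := Submodule.ne_bot_iff _ |>.mp hμ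
    rw [hmem] at hx
    exact eig_le hN x μ hx hx0

end OmegaAux

/-- The largest eigenvalue of `Ω` is `4(N-2)`, and it has multiplicity exactly 2. -/
theorem omegaMat_top_eigenvalue (N : ℕ) (hN : 5 ≤ N) :
    finrank ℝ (Module.End.eigenspace (Matrix.toLin' (OmegaMat N))
        ((4 : ℝ) * ((N : ℝ) - 2))) = 2 ∧
    (∀ μ : ℝ, Module.End.eigenspace (Matrix.toLin' (OmegaMat N)) μ ≠ ⊥ →
      μ ≤ 4 * ((N : ℝ) - 2)) :=
  OmegaAux.omegaMat_top_eigenvalue' N hN
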